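/- Let n ≥ 2 and let (σ_H, g) be a normalized pair, with σ_H(a′, a) = ∏_{i=1}^{n−1} λ_i^{a′_n a_{in}}. Set λ_{i,jn} := g(v_{jn}, u_i) for 1 ≤ i, j ≤ n−1 and λ_{n,jn} := λ_j for 1 ≤ j ≤ n−1. Then for all a, a′ ∈ H(n) and b, b′ ∈ G(n−1) the multiplier τ(a′b, ab′) := σ_H(a′, α_b(a)) g(a,b) of G(n) is given by τ(a′b, ab′) = ∏_{1≤i<j≤n−1} λ_{i,jn}^{a_{jn} b_i + a_n b_{ij}} λ_{j,in}^{a_{in} b_j + a_n(b_i b_j − b_{ij})} · ∏_{j=1}^{n−1} λ_{j,jn}^{a_{jn} b_j + a_n b_j (b_j − 1)/2} · ∏_{j=1}^{n−1} λ_{n,jn}^{a′_n(a_{jn} + b_j a_n) + b_j a_n (a_n − 1)/2} (all exponents are integers). -/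

import Mathlib

open scoped BigOperators

namespace FreeNilp

/-- Index set for pairs `(j,k)` with `j < k`. -/
abbrev PairIdx (n : ℕ) : Type := {p : Fin n × Fin n // p.1 < p.2}

/-- The free nilpotent group of class 2 and rank `n`, realized on
`ℤ^n × ℤ^{n(n-1)/2}`. -/
@[ext] structure G (n : ℕ) where
  u : Fin n → ℤ
  v : PairIdx n → ℤ

namespace G

instance (n : ℕ) : Group (G n) where
  mul r s := ⟨fun i => r.u i + s.u i, fun p => r.v p + s.v p + r.u p.1.1 * s.u p.1.2⟩
  one := ⟨fun _ => 0, fun _ => 0⟩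
  inv r := ⟨fun i => -r.u i, fun p => -r.v p + r.u p.1.1 * r.u p.1.2⟩
  mul_assoc r s t := by
    refine G.ext ?_ ?_ <;> funext x
    · show (r.u x + s.u x) + t.u x = r.u x + (s.u x + t.u x)
      ring
    · show (r.v x + s.v x + r.u x.1.1 * s.u x.1.2) + t.v x +
          (r.u x.1.1 + s.u x.1.1) * t.u x.1.2 =
        r.v x + (s.v x + t.v x + s.u x.1.1 * t.u x.1.2) +
          r.u x.1.1 * (s.u x.1.2 + t.u x.1.2)
      ring
  one_mul r := by
    refine G.ext ?_ ?_ <;> funext x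
    · show 0 + r.u x = r.u x
      ring
    · show 0 + r.v x + 0 * r.u x.1.2 = r.v x
      ring
  mul_one r := by
    refine G.ext ?_ ?_ <;> funext x
    · show r.u x + 0 = r.u x
      ring
    · show r.v x + 0 + r.u x.1.1 * 0 = r.v x
      ring
  inv_mul_cancel r := by
    refine G.ext ?_ ?_ <;> funext x
    · show -r.u x + r.u x = 0
      ring
    · show (-r.v x + r.u x.1.1 * r.u x.1.2) + r.v x + -r.u x.1.1 * r.u x.1.2 = 0
      ring

@[simp] lemma mul_u {n : ℕ} (r s : G n) (i : Fin n) : (r * s).u i = r.u i + s.u i := rfl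
@[simp] lemma mul_v {n : ℕ} (r s : G n) (p : PairIdx n) :
    (r * s).v p = r.v p + s.v p + r.u p.1.1 * s.u p.1.2 := rfl
@[simp] lemma one_u {n : ℕ} (i : Fin n) : (1 : G n).u i = 0 := rfl
@[simp] lemma one_v {n : ℕ} (p : PairIdx n) : (1 : G n).v p = 0 := rfl
@[simp] lemma inv_u {n : ℕ} (r : G n) (i : Fin n) : (r⁻¹).u i = -r.u i := rfl
@[simp] lemma inv_v {n : ℕ} (r : G n) (p : PairIdx n) :
    (r⁻¹).v p = -r.v p + r.u p.1.1 * r.u p.1.2 := rfl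

end G

/-- First-block coordinate `r_i`. -/
def uc {n : ℕ} (r : G n) (i : Fin n) : ℤ := r.u i

/-- Second-block coordinate `r_{jk}` (zero unless `j < k`). -/
def vc {n : ℕ} (r : G n) (j k : Fin n) : ℤ := if h : j < k then r.v ⟨(j, k), h⟩ else 0

/-- A multiplier (2-cocycle with values in the circle group) of a group. -/
def IsMultiplier {Γ : Type*} [Group Γ] (σ : Γ → Γ → Circle) : Prop :=
  (∀ r s t : Γ, σ r s * σ (r * s) t = σ r (s * t) * σ s t) ∧
  ∀ r : Γ, σ r 1 = 1 ∧ σ 1 r = 1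

/-- Similarity (cohomology) of multipliers. -/
def Similar {Γ : Type*} [Group Γ] (σ τ : Γ → Γ → Circle) : Prop :=
  ∃ β : Γ → Circle, ∀ r s : Γ, τ r s = β r * β s * (β (r * s))⁻¹ * σ r s

/-- The subgroup `H(n) ≅ ℤⁿ` of `G n`: only the coordinates `r_n` and `r_{jn}` may
be nonzero. -/
def Hsub (n : ℕ) : Subgroup (G n) where
  carrier := {r | (∀ i : Fin n, (i : ℕ) + 1 < n → r.u i = 0) ∧
                  ∀ p : PairIdx n, (p.1.2 : ℕ) + 1 < n → r.v p = 0}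
  one_mem' := ⟨fun _ _ => rfl, fun _ _ => rfl⟩
  mul_mem' := by
    rintro r s ⟨hr1, hr2⟩ ⟨hs1, hs2⟩
    refine ⟨fun i hi => ?_, fun p hp => ?_⟩
    · simp [hr1 i hi, hs1 i hi]
    · simp [hr2 p hp, hs2 p hp, hs1 p.1.2 hp]
  inv_mem' := by
    rintro r ⟨hr1, hr2⟩
    refine ⟨fun i hi => ?_, fun p hp => ?_⟩
    · simp [hr1 i hi]
    · simp [hr2 p hp, hr1 p.1.2 hp]

/-- The subgroup `G(n-1)` of `G n`: the coordinates `r_n` and `r_{jn}` vanish. -/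
def Gsub (n : ℕ) : Subgroup (G n) where
  carrier := {r | (∀ i : Fin n, (i : ℕ) + 1 = n → r.u i = 0) ∧
                  ∀ p : PairIdx n, (p.1.2 : ℕ) + 1 = n → r.v p = 0}
  one_mem' := ⟨fun _ _ => rfl, fun _ _ => rfl⟩
  mul_mem' := by
    rintro r s ⟨hr1, hr2⟩ ⟨hs1, hs2⟩
    refine ⟨fun i hi => ?_, fun p hp => ?_⟩
    · simp [hr1 i hi, hs1 i hi]
    · simp [hr2 p hp, hs2 p hp, hs1 p.1.2 hp]
  inv_mem' := by
    rintro r ⟨hr1, hr2⟩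
    refine ⟨fun i hi => ?_, fun p hp => ?_⟩
    · simp [hr1 i hi]
    · simp [hr2 p hp, hr1 p.1.2 hp]

lemma mem_Hsub_iff {n : ℕ} {r : G n} :
    r ∈ Hsub n ↔ (∀ i : Fin n, (i : ℕ) + 1 < n → r.u i = 0) ∧
      ∀ p : PairIdx n, (p.1.2 : ℕ) + 1 < n → r.v p = 0 := Iff.rfl

lemma mem_Gsub_iff {n : ℕ} {r : G n} :
    r ∈ Gsub n ↔ (∀ i : Fin n, (i : ℕ) + 1 = n → r.u i = 0) ∧
      ∀ p : PairIdx n, (p.1.2 : ℕ) + 1 = n → r.v p = 0 := Iff.rfl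

/-- `H(n)` is a normal subgroup; conjugation preserves it. -/
lemma conj_mem_Hsub {n : ℕ} (s : G n) {a : G n} (ha : a ∈ Hsub n) :
    s * a * s⁻¹ ∈ Hsub n := by
  obtain ⟨ha1, ha2⟩ := ha
  refine ⟨fun i hi => ?_, fun p hp => ?_⟩
  · simp [ha1 i hi]
  · have hj : (p.1.1 : ℕ) + 1 < n := by
      have h2 : (p.1.1 : ℕ) < (p.1.2 : ℕ) := p.2
      omega
    simp [ha2 p hp, ha1 p.1.2 hp, ha1 p.1.1 hj]

/-- The action `α_b(a) = b a b⁻¹` of `G(n-1)` on `H(n)`. -/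
def conjH {n : ℕ} (b : Gsub n) (a : Hsub n) : Hsub n :=
  ⟨(b : G n) * (a : G n) * (b : G n)⁻¹, conj_mem_Hsub _ a.2⟩

/-- The `H(n)`-part of the unique factorization `r = a·b`, `a ∈ H(n)`, `b ∈ G(n-1)`. -/
def hpart {n : ℕ} (r : G n) : Hsub n :=
  ⟨⟨fun i => if (i : ℕ) + 1 = n then r.u i else 0,
    fun p => if (p.1.2 : ℕ) + 1 = n then r.v p else 0⟩, by
    refine ⟨fun i hi => ?_, fun p hp => ?_⟩
    · exact if_neg (by omega)
    · exact if_neg (by omega)⟩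

/-- The `G(n-1)`-part of the unique factorization `r = a·b`. -/
def gpart {n : ℕ} (r : G n) : Gsub n :=
  ⟨⟨fun i => if (i : ℕ) + 1 = n then 0 else r.u i,
    fun p => if (p.1.2 : ℕ) + 1 = n then 0 else r.v p⟩, by
    refine ⟨fun i hi => ?_, fun p hp => ?_⟩
    · exact if_pos hi
    · exact if_pos hp⟩

/-- `r` indeed factors as `hpart r * gpart r`. -/
lemma hpart_mul_gpart {n : ℕ} (r : G n) : ((hpart r : G n)) * (gpart r : G n) = r := by
  refine G.ext ?_ ?_ <;> funext x
  · show (if ((x : ℕ)) + 1 = n then r.u x else 0) + (if (x : ℕ) + 1 = n then 0 else r.u x) = r.u x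
    split <;> ring
  · show (if ((x.1.2 : ℕ)) + 1 = n then r.v x else 0) +
      (if (x.1.2 : ℕ) + 1 = n then 0 else r.v x) +
      (if ((x.1.1 : ℕ)) + 1 = n then r.u x.1.1 else 0) *
        (if (x.1.2 : ℕ) + 1 = n then 0 else r.u x.1.2) = r.v x
    have h2 : (x.1.1 : ℕ) < (x.1.2 : ℕ) := x.2
    have h3 : (x.1.2 : ℕ) < n := x.1.2.isLt
    rcases eq_or_ne ((x.1.2 : ℕ) + 1) n with h | h
    · rw [if_pos h, if_pos h, if_pos h, if_neg (by omega)]; ring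
    · rw [if_neg h, if_neg h, if_neg h, if_neg (show ¬((x.1.1 : ℕ) + 1 = n) by omega)]
      ring

/-- An admissible pair `(σ_H, g)` (Mackey data with trivial multiplier on `G(n-1)`). -/
structure AdmissiblePair (n : ℕ) (σH : Hsub n → Hsub n → Circle)
    (g : Hsub n → Gsub n → Circle) : Prop where
  multH : IsMultiplier σH
  g_one_right : ∀ a : Hsub n, g a 1 = 1
  g_one_left : ∀ b : Gsub n, g 1 b = 1
  g_add : ∀ (a a' : Hsub n) (b : Gsub n),
    g (a * a') b = σH (conjH b a) (conjH b a') * (σH a a')⁻¹ * (g a b * g a' b)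
  g_mul : ∀ (a : Hsub n) (b b' : Gsub n), g a (b * b') = g (conjH b' a) b * g a b'

/-- An admissible triple `(σ_H, g, σ')`. -/
def AdmissibleTriple (n : ℕ) (σH : Hsub n → Hsub n → Circle)
    (g : Hsub n → Gsub n → Circle) (σ' : Gsub n → Gsub n → Circle) : Prop :=
  AdmissiblePair n σH g ∧ IsMultiplier σ'

/-- The map `σ_n(a′b, ab′) = σ_H(a′, α_b(a)) g(a,b) σ′(b,b′)` defined via the unique
factorizations. -/
noncomputable def sigmaN {n : ℕ} (σH : Hsub n → Hsub n → Circle) (g : Hsub n → Gsub n → Circle)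
    (σ' : Gsub n → Gsub n → Circle) (r s : G n) : Circle :=
  σH (hpart r) (conjH (gpart r) (hpart s)) * g (hpart s) (gpart r) *
    σ' (gpart r) (gpart s)

/-- The map `τ(a′b, ab′) = σ_H(a′, α_b(a)) g(a,b)` defined via the unique factorizations. -/
noncomputable def tauN {n : ℕ} (σH : Hsub n → Hsub n → Circle) (g : Hsub n → Gsub n → Circle)
    (r s : G n) : Circle :=
  σH (hpart r) (conjH (gpart r) (hpart s)) * g (hpart s) (gpart r)

/-- The generator `u_i`. -/
def uE {n : ℕ} (i : Fin n) : G n := ⟨fun j => if j = i then 1 else 0, fun _ => 0⟩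

/-- The generator `v_{jk}`. -/
def vE {n : ℕ} (j k : Fin n) : G n := ⟨fun _ => 0, fun p => if p.1 = (j, k) then 1 else 0⟩

/-- The last index `n` (i.e. `n-1` in `Fin n`). -/
def lastI (n : ℕ) (hn : 0 < n) : Fin n := ⟨n - 1, by omega⟩

/-- `u_n` as an element of `H(n)`. -/
def unH {n : ℕ} (hn : 0 < n) : Hsub n :=
  ⟨uE (lastI n hn), by
    refine ⟨fun i hi => ?_, fun p hp => rfl⟩
    have h : i ≠ lastI n hn := by
      intro h; apply absurd hi; rw [h]; show ¬ (n - 1) + 1 < n; omega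
    simp [uE, h]⟩

/-- `u_i` (for `i < n`) as an element of `G(n-1)`. -/
def uiG {n : ℕ} (i : Fin n) (hi : (i : ℕ) + 1 < n) : Gsub n :=
  ⟨uE i, by
    refine ⟨fun j hj => ?_, fun p hp => rfl⟩
    have h : j ≠ i := by intro h; rw [h] at hj; omega
    simp [uE, h]⟩

/-- `v_{in}` (for `i < n`) as an element of `H(n)`. -/
def vinH {n : ℕ} (i : Fin n) (hi : (i : ℕ) + 1 < n) : Hsub n :=
  ⟨vE i (lastI n (by omega)), by
    refine ⟨fun j hj => rfl, fun p hp => ?_⟩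
    have h : p.1 ≠ (i, lastI n (by omega)) := by
      intro h
      have h2 : (p.1.2 : ℕ) = n - 1 := by rw [h]; rfl
      omega
    simp [vE, h]⟩

/-- `v_{ij}` (for `j < n`) as an element of `G(n-1)`. -/
def vijG {n : ℕ} (i j : Fin n) (hj : (j : ℕ) + 1 < n) : Gsub n :=
  ⟨vE i j, by
    refine ⟨fun k hk => rfl, fun p hp => ?_⟩
    have h : p.1 ≠ (i, j) := by
      intro h
      have h2 : (p.1.2 : ℕ) = (j : ℕ) := by rw [h]
      omega
    simp [vE, h]⟩

/-- The "word part" `w(a)` of `a ∈ H(n)`. -/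
def wH {n : ℕ} (a : Hsub n) : Hsub n :=
  ⟨⟨(a : G n).u, fun _ => 0⟩,
    ⟨fun i hi => (mem_Hsub_iff.mp a.2).1 i hi, fun _ _ => rfl⟩⟩

/-- The "central part" `z(a)` of `a ∈ H(n)`. -/
def zH {n : ℕ} (a : Hsub n) : Hsub n :=
  ⟨⟨fun _ => 0, (a : G n).v⟩,
    ⟨fun _ _ => rfl, fun p hp => (mem_Hsub_iff.mp a.2).2 p hp⟩⟩

/-- The "word part" `w(b)` of `b ∈ G(n-1)`. -/
def wG {n : ℕ} (b : Gsub n) : Gsub n :=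
  ⟨⟨(b : G n).u, fun _ => 0⟩,
    ⟨fun i hi => (mem_Gsub_iff.mp b.2).1 i hi, fun _ _ => rfl⟩⟩

/-- The "central part" `z(b)` of `b ∈ G(n-1)`. -/
def zG {n : ℕ} (b : Gsub n) : Gsub n :=
  ⟨⟨fun _ => 0, (b : G n).v⟩,
    ⟨fun _ _ => rfl, fun p hp => (mem_Gsub_iff.mp b.2).2 p hp⟩⟩

/-- `g(v_{in}, u_j)`, as a total function (equal to `1` outside the admissible range). -/
noncomputable def gvu {n : ℕ} (g : Hsub n → Gsub n → Circle) (i j : Fin n) : Circle :=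
  if h : (i : ℕ) + 1 < n ∧ (j : ℕ) + 1 < n then g (vinH i h.1) (uiG j h.2) else 1

/-- `g(u_n, v_{ij})`, as a total function (equal to `1` outside the admissible range). -/
noncomputable def guv {n : ℕ} (g : Hsub n → Gsub n → Circle) (i j : Fin n) : Circle :=
  if h : (j : ℕ) + 1 < n then g (unH (by omega)) (vijG i j h) else 1

/-- A normalized pair `(σ_H, g)`: admissible, with `σ_H` of the standard `λ`-form, and
`g(u_n, u_i) = 1` for all `1 ≤ i ≤ n-1`. -/
def Normalized {n : ℕ} (hn : 0 < n) (σH : Hsub n → Hsub n → Circle)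
    (g : Hsub n → Gsub n → Circle) (lam : Fin n → Circle) : Prop :=
  AdmissiblePair n σH g ∧
  (∀ a' a : Hsub n, σH a' a =
    ∏ i ∈ Finset.univ.filter (fun i : Fin n => (i : ℕ) + 1 < n),
      lam i ^ (uc (a' : G n) (lastI n hn) * vc (a : G n) i (lastI n hn))) ∧
  ∀ (i : Fin n) (hi : (i : ℕ) + 1 < n), g (unH hn) (uiG i hi) = 1

/-- The multiplier `σ_λ` of `G n` attached to a family of parameters
`λ_{i,jk} ∈ 𝕋` (`1 ≤ i ≤ k`, `1 ≤ j < k ≤ n`). -/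
noncomputable def sigmaLam {n : ℕ} (lam : Fin n → Fin n → Fin n → Circle) (r s : G n) : Circle :=
  (∏ t ∈ Finset.univ.filter
      (fun t : Fin n × Fin n × Fin n => t.1 < t.2.1 ∧ t.2.1 < t.2.2),
    lam t.1 t.2.1 t.2.2 ^ (vc s t.2.1 t.2.2 * uc r t.1 + uc s t.2.2 * vc r t.1 t.2.1) *
    lam t.2.1 t.1 t.2.2 ^ (vc s t.1 t.2.2 * uc r t.2.1 +
      uc s t.2.2 * (uc r t.1 * uc r t.2.1 - vc r t.1 t.2.1))) *
  ∏ p ∈ Finset.univ.filter (fun p : Fin n × Fin n => p.1 < p.2),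
    lam p.1 p.1 p.2 ^ (vc s p.1 p.2 * uc r p.1 +
      uc s p.2 * (uc r p.1 * (uc r p.1 - 1) / 2)) *
    lam p.2 p.1 p.2 ^ (uc r p.2 * (vc s p.1 p.2 + uc r p.1 * uc s p.2) +
      uc r p.1 * (uc s p.2 * (uc s p.2 - 1) / 2))

/-- The extension of the parameter family to indices `i > k`, via
`λ_{k,ij} = λ_{i,jk}⁻¹ λ_{j,ik}` for `i < j < k`. -/
noncomputable def lamExt {n : ℕ} (lam : Fin n → Fin n → Fin n → Circle) (i j k : Fin n) : Circle :=
  if i ≤ k then lam i j k else (lam j k i)⁻¹ * lam k j i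

-- AUX BEGIN
section Aux

variable {n : ℕ}


lemma zpow_coords {n : ℕ} (r : G n) (h : ∀ p : PairIdx n, r.u p.1.1 * r.u p.1.2 = 0) (m : ℤ) :
    r ^ m = ⟨fun i => m * r.u i, fun p => m * r.v p⟩ := by
  induction m using Int.induction_on with
  | zero =>
      rw [zpow_zero]
      refine G.ext ?_ ?_ <;> funext x
      · show (0:ℤ) = (0:ℤ) * r.u x; ring
      · show (0:ℤ) = (0:ℤ) * r.v x; ring
  | succ k ih =>
      rw [zpow_add_one, ih]
      refine G.ext ?_ ?_ <;> funext x
      · show (k:ℤ) * r.u x + r.u x = ((k:ℤ)+1) * r.u x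
        ring
      · show (k:ℤ) * r.v x + r.v x + ((k:ℤ) * r.u x.1.1) * r.u x.1.2 = ((k:ℤ)+1) * r.v x
        nlinarith [h x]
  | pred k ih =>
      rw [sub_eq_add_neg, zpow_add, ih, zpow_neg_one]
      refine G.ext ?_ ?_ <;> funext x
      · show (-(k:ℤ)) * r.u x + -r.u x = (-(k:ℤ)-1) * r.u x
        ring
      · show (-(k:ℤ)) * r.v x + (-r.v x + r.u x.1.1 * r.u x.1.2) +
            ((-(k:ℤ)) * r.u x.1.1) * (-r.u x.1.2) = (-(k:ℤ)-1) * r.v x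
        nlinarith [h x]

lemma Hsub_u (a : Hsub n) (i : Fin n) (hi : (i:ℕ)+1 < n) : (a : G n).u i = 0 := a.2.1 i hi
lemma Hsub_v (a : Hsub n) (p : PairIdx n) (hp : (p.1.2:ℕ)+1 < n) : (a : G n).v p = 0 := a.2.2 p hp
lemma Gsub_u (b : Gsub n) (i : Fin n) (hi : (i:ℕ)+1 = n) : (b : G n).u i = 0 := b.2.1 i hi
lemma Gsub_v (b : Gsub n) (p : PairIdx n) (hp : (p.1.2:ℕ)+1 = n) : (b : G n).v p = 0 := b.2.2 p hp

lemma conjH_coe_u (b : Gsub n) (a : Hsub n) (i : Fin n) :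
    ((conjH b a : Hsub n) : G n).u i = (a : G n).u i := by
  show ((b : G n) * (a : G n) * (b : G n)⁻¹).u i = _
  simp

lemma conjH_coe_v (b : Gsub n) (a : Hsub n) (p : PairIdx n) :
    ((conjH b a : Hsub n) : G n).v p = (a : G n).v p
      + (b : G n).u p.1.1 * (a : G n).u p.1.2 - (a : G n).u p.1.1 * (b : G n).u p.1.2 := by
  show ((b : G n) * (a : G n) * (b : G n)⁻¹).v p = _
  simp
  ring

lemma hpart_of_mul (a : Hsub n) (b : Gsub n) : hpart ((a : G n) * (b : G n)) = a := by
  refine Subtype.ext (G.ext ?_ ?_) <;> funext x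
  · show (if (x:ℕ)+1 = n then ((a:G n)*(b:G n)).u x else 0) = (a:G n).u x
    rcases eq_or_ne ((x:ℕ)+1) n with h | h
    · rw [if_pos h]; simp [Gsub_u b x h]
    · rw [if_neg h]; exact (a.2.1 x (by have := x.isLt; omega)).symm
  · show (if (x.1.2:ℕ)+1 = n then ((a:G n)*(b:G n)).v x else 0) = (a:G n).v x
    rcases eq_or_ne ((x.1.2:ℕ)+1) n with h | h
    · rw [if_pos h]
      have h1 : (x.1.1:ℕ)+1 < n := by have := x.2; have := x.1.2.isLt; omega
      simp [Gsub_v b x h, Gsub_u b _ h, Hsub_u a _ h1]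
    · rw [if_neg h]; exact (a.2.2 x (by have := x.1.2.isLt; omega)).symm

lemma gpart_of_mul (a : Hsub n) (b : Gsub n) : gpart ((a : G n) * (b : G n)) = b := by
  refine Subtype.ext (G.ext ?_ ?_) <;> funext x
  · show (if (x:ℕ)+1 = n then 0 else ((a:G n)*(b:G n)).u x) = (b:G n).u x
    rcases eq_or_ne ((x:ℕ)+1) n with h | h
    · rw [if_pos h]; exact (b.2.1 x h).symm
    · rw [if_neg h]; simp [Hsub_u a x (by have := x.isLt; omega)]
  · show (if (x.1.2:ℕ)+1 = n then 0 else ((a:G n)*(b:G n)).v x) = (b:G n).v x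
    rcases eq_or_ne ((x.1.2:ℕ)+1) n with h | h
    · rw [if_pos h]; exact (b.2.2 x h).symm
    · rw [if_neg h]
      have h1 : (x.1.1:ℕ)+1 < n := by have := x.2; have := x.1.2.isLt; omega
      have h2 : (x.1.2:ℕ)+1 < n := by have := x.1.2.isLt; omega
      simp [Hsub_v a x h2, Hsub_u a _ h1]

lemma tauN_red (σH : Hsub n → Hsub n → Circle) (g : Hsub n → Gsub n → Circle)
    (a a' : Hsub n) (b b' : Gsub n) :
    tauN σH g ((a' : G n) * (b : G n)) ((a : G n) * (b' : G n)) =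
      σH a' (conjH b a) * g a b := by
  unfold tauN
  simp only [hpart_of_mul, gpart_of_mul]

end Aux

section Main

variable {n : ℕ}

/-- The index set `{i : i+1 < n}`. -/
def Fi (n : ℕ) : Finset (Fin n) := Finset.univ.filter (fun i => (i:ℕ)+1 < n)

def P2 (n : ℕ) : Finset (Fin n × Fin n) :=
  Finset.univ.filter (fun p => p.1 < p.2 ∧ (p.2:ℕ)+1 < n)

lemma mem_Fi {i : Fin n} : i ∈ Fi n ↔ (i:ℕ)+1 < n := by simp [Fi]

lemma mem_P2 {p : Fin n × Fin n} : p ∈ P2 n ↔ p.1 < p.2 ∧ (p.2:ℕ)+1 < n := by simp [P2]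

def laF (hn : 2 ≤ n) : Fin n := lastI n (Nat.zero_lt_of_lt hn)

lemma lt_laF (hn : 2 ≤ n) {i : Fin n} (hi : (i:ℕ)+1 < n) : i < laF hn := by
  simp only [laF, lastI, Fin.lt_def]; omega

variable (hn : 2 ≤ n)

def an (hn : 2 ≤ n) (a : Hsub n) : ℤ := (a : G n).u (laF hn)
def avv (hn : 2 ≤ n) (a : Hsub n) (i : Fin n) : ℤ := vc (a : G n) i (laF hn)
def buu (b : Gsub n) (i : Fin n) : ℤ := (b : G n).u i
def bvv (b : Gsub n) (i j : Fin n) : ℤ := vc (b : G n) i j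

lemma avv_eq (a : Hsub n) {i : Fin n} (hi : (i:ℕ)+1 < n) :
    avv hn a i = (a : G n).v ⟨(i, laF hn), lt_laF hn hi⟩ := dif_pos _

lemma bvv_eq (b : Gsub n) {i j : Fin n} (hij : i < j) :
    bvv b i j = (b : G n).v ⟨(i, j), hij⟩ := dif_pos _

lemma an_mul (a a' : Hsub n) : an hn (a * a') = an hn a + an hn a' := by
  show ((a : G n) * (a' : G n)).u _ = _
  simp [an]

lemma avv_mul (a a' : Hsub n) {i : Fin n} (hi : (i:ℕ)+1 < n) :
    avv hn (a * a') i = avv hn a i + avv hn a' i := by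
  rw [avv_eq hn _ hi, avv_eq hn a hi, avv_eq hn a' hi]
  show ((a : G n) * (a' : G n)).v _ = _
  rw [G.mul_v, Hsub_u a _ hi]
  ring

lemma an_conjH (b : Gsub n) (a : Hsub n) : an hn (conjH b a) = an hn a := conjH_coe_u b a _

lemma avv_conjH (b : Gsub n) (a : Hsub n) {i : Fin n} (hi : (i:ℕ)+1 < n) :
    avv hn (conjH b a) i = avv hn a i + buu b i * an hn a := by
  rw [avv_eq hn _ hi, avv_eq hn a hi, conjH_coe_v, Hsub_u a i hi]
  simp only [buu, an]
  ring

/-- Additive-to-power helper. -/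
lemma int_hom_pow {M : Type*} [Group M] {f : ℤ → M} (hf : ∀ x y, f (x+y) = f x * f y) (c : ℤ) :
    f c = f 1 ^ c := by
  have h0 : f 0 = 1 := by
    have := hf 0 0
    rw [add_zero] at this
    exact (mul_eq_left.mp this.symm)
  have hneg : f (-1) = (f 1)⁻¹ := by
    have := hf 1 (-1)
    rw [add_neg_cancel, h0] at this
    exact (eq_inv_of_mul_eq_one_right this.symm)
  induction c using Int.induction_on with
  | zero => simpa using h0
  | succ k ih => rw [hf k 1, ih, zpow_add_one]
  | pred k ih => rw [show (-(k:ℤ) - 1) = (-k) + (-1) by ring, hf, ih, hneg, zpow_add, zpow_neg_one]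

lemma half_succ (m : ℤ) : (m+1)*m/2 = m*(m-1)/2 + m := by
  obtain ⟨t, ht⟩ := Int.even_mul_succ_self (m-1)
  have h1 : m*(m-1) = 2*t := by nlinarith [ht]
  have h2 : (m+1)*m = 2*(t+m) := by nlinarith [ht]
  rw [h1, h2, Int.mul_ediv_cancel_left _ (by norm_num), Int.mul_ediv_cancel_left _ (by norm_num)]

lemma half_pred (m : ℤ) : (m-1)*(m-2)/2 = m*(m-1)/2 - (m-1) := by
  obtain ⟨t, ht⟩ := Int.even_mul_succ_self (m-2)
  have h1 : (m-1)*(m-2) = 2*t := by nlinarith [ht]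
  have h2 : m*(m-1) = 2*(t+(m-1)) := by nlinarith [ht]
  rw [h1, h2, Int.mul_ediv_cancel_left _ (by norm_num), Int.mul_ediv_cancel_left _ (by norm_num)]
  ring

end Main

section Cocycle

variable {n : ℕ} {σH : Hsub n → Hsub n → Circle} {g : Hsub n → Gsub n → Circle}
  {lam : Fin n → Circle}

/-- `σ_H` has the standard `λ`-form. -/
def sigOK (hn : 2 ≤ n) (σH : Hsub n → Hsub n → Circle) (lam : Fin n → Circle) : Prop :=
  ∀ a' a : Hsub n, σH a' a = ∏ i ∈ Fi n, lam i ^ (an hn a' * avv hn a i)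

variable (hn : 2 ≤ n)

lemma normalized_sigOK (hnorm : Normalized (Nat.zero_lt_of_lt hn) σH g lam) : sigOK hn σH lam :=
  fun a' a => hnorm.2.1 a' a

lemma sigma_corr (hσ : sigOK hn σH lam) (b : Gsub n) (a a' : Hsub n) :
    σH (conjH b a) (conjH b a') * (σH a a')⁻¹ =
      ∏ i ∈ Fi n, lam i ^ (an hn a * an hn a' * buu b i) := by
  rw [hσ, hσ, ← Finset.prod_inv_distrib, ← Finset.prod_mul_distrib]
  refine Finset.prod_congr rfl fun i hi => ?_
  rw [← zpow_neg, ← zpow_add]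
  congr 1
  rw [an_conjH, avv_conjH hn b a' (mem_Fi.mp hi)]
  ring

lemma g_add' (hpair : AdmissiblePair n σH g) (hσ : sigOK hn σH lam) (a a' : Hsub n)
    (b : Gsub n) :
    g (a * a') b =
      (∏ i ∈ Fi n, lam i ^ (an hn a * an hn a' * buu b i)) * (g a b * g a' b) := by
  rw [hpair.g_add, sigma_corr hn hσ]

lemma g_add0 (hpair : AdmissiblePair n σH g) (hσ : sigOK hn σH lam) (a a' : Hsub n)
    (b : Gsub n) (h : an hn a = 0 ∨ an hn a' = 0) :
    g (a * a') b = g a b * g a' b := by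
  rw [g_add' hn hpair hσ]
  have h1 : ∀ i ∈ Fi n, lam i ^ (an hn a * an hn a' * buu b i) = (1 : Circle) := by
    intro i _
    rcases h with h | h <;> simp [h]
  rw [Finset.prod_congr rfl h1, Finset.prod_const_one, one_mul]

lemma conjH_cen (b : Gsub n) (a : Hsub n) (ha : an hn a = 0) : conjH b a = a := by
  refine Subtype.ext (G.ext ?_ ?_) <;> funext x
  · exact conjH_coe_u b a x
  · rw [conjH_coe_v]
    have h1 : (a : G n).u x.1.1 = 0 :=
      Hsub_u a _ (by have := x.2; have := x.1.2.isLt; omega)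
    have h2 : (a : G n).u x.1.2 = 0 := by
      rcases eq_or_ne ((x.1.2 : ℕ)+1) n with h | h
      · have : x.1.2 = laF hn := Fin.ext (by simp only [laF, lastI]; omega)
        rw [this]; exact ha
      · exact Hsub_u a _ (by have := x.1.2.isLt; omega)
    rw [h1, h2]; ring

lemma g_hom_cen (hpair : AdmissiblePair n σH g) (a : Hsub n) (ha : an hn a = 0)
    (b b' : Gsub n) : g a (b * b') = g a b * g a b' := by
  rw [hpair.g_mul, conjH_cen hn b' a ha, mul_comm]

end Cocycle

section Gens

variable {n : ℕ} (hn : 2 ≤ n)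

lemma unH_zpow_coe (h0 : 0 < n) (m : ℤ) :
    (((unH h0 ^ m : Hsub n)) : G n) =
      ⟨fun i => if i = lastI n h0 then m else 0, fun _ => 0⟩ := by
  rw [SubgroupClass.coe_zpow]
  rw [zpow_coords _ (fun p => ?_)]
  · refine G.ext ?_ ?_ <;> funext x
    · show m * (if x = lastI n h0 then (1:ℤ) else 0) = _
      split <;> rename_i hx <;> simp [hx]
    · show m * 0 = 0
      ring
  · show (if p.1.1 = lastI n h0 then (1:ℤ) else 0) * _ = 0
    rw [if_neg, zero_mul]
    intro hc
    have h2 : (p.1.1 : ℕ) < (p.1.2 : ℕ) := p.2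
    have h3 : (p.1.2 : ℕ) < n := p.1.2.isLt
    have : (p.1.1 : ℕ) = n - 1 := by rw [hc]; rfl
    omega

lemma vinH_zpow_coe {i : Fin n} (hi : (i:ℕ)+1 < n) (m : ℤ) :
    (((vinH i hi ^ m : Hsub n)) : G n) =
      ⟨fun _ => 0, fun p => if p.1 = (i, lastI n (by omega)) then m else 0⟩ := by
  rw [SubgroupClass.coe_zpow]
  rw [zpow_coords _ (fun p => by show (0:ℤ) * 0 = 0; ring)]
  refine G.ext ?_ ?_ <;> funext x
  · show m * 0 = 0; ring
  · show m * (if x.1 = (i, lastI n _) then (1:ℤ) else 0) = _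
    split <;> rename_i hx <;> simp [hx]

lemma uiG_zpow_coe {j : Fin n} (hj : (j:ℕ)+1 < n) (m : ℤ) :
    (((uiG j hj ^ m : Gsub n)) : G n) =
      ⟨fun k => if k = j then m else 0, fun _ => 0⟩ := by
  rw [SubgroupClass.coe_zpow]
  rw [zpow_coords _ (fun p => ?_)]
  · refine G.ext ?_ ?_ <;> funext x
    · show m * (if x = j then (1:ℤ) else 0) = _
      split <;> rename_i hx <;> simp [hx]
    · show m * 0 = 0; ring
  · show (if p.1.1 = j then (1:ℤ) else 0) * (if p.1.2 = j then (1:ℤ) else 0) = 0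
    have hor : p.1.1 ≠ j ∨ p.1.2 ≠ j := by
      rcases eq_or_ne p.1.1 j with h | h
      · right; intro hc
        have := p.2
        rw [h, hc] at this
        exact absurd this (lt_irrefl j)
      · left; exact h
    rcases hor with h | h
    · rw [if_neg h, zero_mul]
    · rw [if_neg h, mul_zero]

lemma vijG_zpow_coe {i j : Fin n} (hj : (j:ℕ)+1 < n) (m : ℤ) :
    (((vijG i j hj ^ m : Gsub n)) : G n) =
      ⟨fun _ => 0, fun p => if p.1 = (i, j) then m else 0⟩ := by
  rw [SubgroupClass.coe_zpow]
  rw [zpow_coords _ (fun p => by show (0:ℤ) * 0 = 0; ring)]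
  refine G.ext ?_ ?_ <;> funext x
  · show m * 0 = 0; ring
  · show m * (if x.1 = (i, j) then (1:ℤ) else 0) = _
    split <;> rename_i hx <;> simp [hx]

end Gens

section Vals

variable {n : ℕ} (hn : 2 ≤ n)

lemma an_unH_pow (m : ℤ) : an hn ((unH (Nat.zero_lt_of_lt hn)) ^ m) = m := by
  unfold an
  rw [unH_zpow_coe]
  exact if_pos rfl

lemma avv_unH_pow (m : ℤ) (i : Fin n) : avv hn ((unH (Nat.zero_lt_of_lt hn)) ^ m) i = 0 := by
  unfold avv vc
  split
  · rw [unH_zpow_coe]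
  · rfl

lemma an_vinH_pow {i : Fin n} (hi : (i:ℕ)+1 < n) (m : ℤ) : an hn (vinH i hi ^ m) = 0 := by
  unfold an
  rw [vinH_zpow_coe hn]

lemma avv_vinH_pow {i : Fin n} (hi : (i:ℕ)+1 < n) (m : ℤ) {k : Fin n} (hk : (k:ℕ)+1 < n) :
    avv hn (vinH i hi ^ m) k = if k = i then m else 0 := by
  rw [avv_eq hn _ hk, vinH_zpow_coe hn]
  show (if ((k, laF hn) : Fin n × Fin n) = (i, lastI n _) then m else 0) = _
  have : ((k, laF hn) : Fin n × Fin n) = (i, lastI n (by omega)) ↔ k = i := by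
    rw [Prod.ext_iff]
    refine ⟨fun h => h.1, fun h => ⟨h, rfl⟩⟩
  rw [if_congr this (Eq.refl m) (Eq.refl 0)]

lemma buu_uiG_pow {j : Fin n} (hj : (j:ℕ)+1 < n) (m : ℤ) (k : Fin n) :
    buu (uiG j hj ^ m) k = if k = j then m else 0 := by
  unfold buu
  rw [uiG_zpow_coe]

lemma bvv_uiG_pow {j : Fin n} (hj : (j:ℕ)+1 < n) (m : ℤ) (k l : Fin n) :
    bvv (uiG j hj ^ m) k l = 0 := by
  unfold bvv vc
  split
  · rw [uiG_zpow_coe]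
  · rfl

lemma buu_vijG_pow {i j : Fin n} (hj : (j:ℕ)+1 < n) (m : ℤ) (k : Fin n) :
    buu (vijG i j hj ^ m) k = 0 := by
  unfold buu
  rw [vijG_zpow_coe]

lemma bvv_vijG_pow {i j : Fin n} (hj : (j:ℕ)+1 < n) (m : ℤ) {k l : Fin n} (hkl : k < l) :
    bvv (vijG i j hj ^ m) k l = if (k, l) = (i, j) then m else 0 := by
  rw [bvv_eq _ hkl, vijG_zpow_coe]

/-- The central correction element `α_b(u_n) u_n⁻¹`. -/
def Zel (hn : 2 ≤ n) (b : Gsub n) : Hsub n :=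
  ⟨⟨fun _ => 0, fun p => if (p.1.2:ℕ)+1 = n then (b : G n).u p.1.1 else 0⟩,
    fun _ _ => rfl, fun p hp => if_neg (by omega)⟩

lemma an_Zel (b : Gsub n) : an hn (Zel hn b) = 0 := rfl

lemma avv_Zel (b : Gsub n) {i : Fin n} (hi : (i:ℕ)+1 < n) :
    avv hn (Zel hn b) i = buu b i := by
  rw [avv_eq hn _ hi]
  show (if ((laF hn : Fin n) : ℕ)+1 = n then (b : G n).u i else 0) = _
  rw [if_pos (by show (n-1)+1 = n; omega)]
  rfl

lemma conjH_unH (b : Gsub n) :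
    conjH b (unH (Nat.zero_lt_of_lt hn)) = unH (Nat.zero_lt_of_lt hn) * Zel hn b := by
  refine Subtype.ext (G.ext ?_ ?_) <;> funext x
  · rw [conjH_coe_u]
    show (unH (by omega : 0 < n) : G n).u x = (unH (by omega : 0 < n) : G n).u x + 0
    ring
  · rw [conjH_coe_v]
    show (0:ℤ) + (b : G n).u x.1.1 * (if x.1.2 = lastI n (by omega) then 1 else 0) -
        (if x.1.1 = lastI n (by omega) then (1:ℤ) else 0) * (b : G n).u x.1.2 =
      0 + (if (x.1.2:ℕ)+1 = n then (b : G n).u x.1.1 else 0) +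
        (if x.1.1 = lastI n (by omega) then (1:ℤ) else 0) * 0
    have h1 : x.1.1 ≠ lastI n (by omega : 0 < n) := by
      intro hc
      have h2 : (x.1.1 : ℕ) < (x.1.2 : ℕ) := x.2
      have h3 : (x.1.2 : ℕ) < n := x.1.2.isLt
      have : (x.1.1 : ℕ) = n - 1 := by rw [hc]; rfl
      omega
    rw [if_neg h1]
    by_cases hc : (x.1.2:ℕ)+1 = n
    · rw [if_pos hc, if_pos (Fin.ext (show ((x.1.2:ℕ)) = n-1 by omega))]
      ring
    · rw [if_neg hc, if_neg (fun h => hc (by rw [h]; show (n-1)+1 = n; omega))]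
      ring

lemma Zel_uiG {k : Fin n} (hk : (k:ℕ)+1 < n) : Zel hn (uiG k hk) = vinH k hk := by
  refine Subtype.ext (G.ext ?_ ?_) <;> funext x
  · rfl
  · show (if (x.1.2:ℕ)+1 = n then (if x.1.1 = k then (1:ℤ) else 0) else 0) =
      if x.1 = (k, lastI n (by omega)) then 1 else 0
    by_cases h2 : (x.1.2:ℕ)+1 = n
    · rw [if_pos h2]
      have he : (x.1 = (k, lastI n (by omega : 0 < n))) ↔ x.1.1 = k := by
        rw [Prod.ext_iff]
        exact ⟨fun h => h.1, fun h => ⟨h, Fin.ext (show ((x.1.2:ℕ)) = n-1 by omega)⟩⟩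
      rw [if_congr he (Eq.refl (1:ℤ)) (Eq.refl 0)]
    · rw [if_neg h2, if_neg]
      intro hc
      have : (x.1.2 : ℕ) = n - 1 := by rw [hc]; rfl
      omega

lemma gen_rel {j k : Fin n} (hj : (j:ℕ)+1 < n) (hk : (k:ℕ)+1 < n) (hjk : j < k) :
    uiG j hj * uiG k hk = vijG j k hk * (uiG k hk * uiG j hj) := by
  refine Subtype.ext (G.ext ?_ ?_) <;> funext x
  · show (if x = j then (1:ℤ) else 0) + (if x = k then 1 else 0) =
      0 + ((if x = k then (1:ℤ) else 0) + (if x = j then 1 else 0))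
    ring
  · show 0 + 0 + (if x.1.1 = j then (1:ℤ) else 0) * (if x.1.2 = k then 1 else 0) =
      (if x.1 = (j, k) then (1:ℤ) else 0) +
        (0 + 0 + (if x.1.1 = k then (1:ℤ) else 0) * (if x.1.2 = j then 1 else 0)) +
        0 * ((if x.1.2 = k then (1:ℤ) else 0) + (if x.1.2 = j then 1 else 0))
    have key : (if x.1.1 = k then (1:ℤ) else 0) * (if x.1.2 = j then 1 else 0) = 0 := by
      rcases eq_or_ne x.1.2 j with h | h
      · have hne : x.1.1 ≠ k := by
          intro hc
          have h2 := x.2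
          rw [hc, h] at h2
          exact absurd hjk (lt_asymm h2)
        rw [if_neg hne, zero_mul]
      · rw [if_neg h, mul_zero]
    rw [key]
    by_cases h1 : x.1.1 = j <;> by_cases h2 : x.1.2 = k
    · rw [if_pos h1, if_pos h2, if_pos (Prod.ext_iff.mpr ⟨h1, h2⟩)]
      ring
    · rw [if_pos h1, if_neg h2, if_neg (fun hc => h2 (Prod.ext_iff.mp hc).2)]
      ring
    · rw [if_neg h1, if_neg (fun hc => h1 (Prod.ext_iff.mp hc).1)]
      ring
    · rw [if_neg h1, if_neg (fun hc => h1 (Prod.ext_iff.mp hc).1)]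
      ring

end Vals

section GVals

variable {n : ℕ} {σH : Hsub n → Hsub n → Circle} {g : Hsub n → Gsub n → Circle}
  {lam : Fin n → Circle} (hn : 2 ≤ n)

lemma gvu_eq {i j : Fin n} (hi : (i:ℕ)+1 < n) (hj : (j:ℕ)+1 < n) :
    gvu g i j = g (vinH i hi) (uiG j hj) := dif_pos ⟨hi, hj⟩

lemma an_vinH {i : Fin n} (hi : (i:ℕ)+1 < n) : an hn (vinH i hi) = 0 := rfl

lemma g_cen_vij (hpair : AdmissiblePair n σH g) (hσ : sigOK hn σH lam)
    (a : Hsub n) (ha : an hn a = 0) {j k : Fin n} (hjk : j < k)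
    (hk : (k:ℕ)+1 < n) : g a (vijG j k hk) = 1 := by
  have hj : (j:ℕ)+1 < n := by
    have h2 : (j:ℕ) < (k:ℕ) := hjk
    omega
  have e1 : g a (uiG j hj * uiG k hk) = g a (uiG j hj) * g a (uiG k hk) :=
    g_hom_cen hn hpair a ha _ _
  rw [gen_rel hj hk hjk, g_hom_cen hn hpair a ha, g_hom_cen hn hpair a ha] at e1
  rw [mul_comm (g a (uiG j hj))] at e1
  exact right_eq_mul.mp e1.symm

lemma g_unH_uu (hnorm : Normalized (Nat.zero_lt_of_lt hn) σH g lam) {j k : Fin n}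
    (hj : (j:ℕ)+1 < n) (hk : (k:ℕ)+1 < n) :
    g (unH (Nat.zero_lt_of_lt hn)) (uiG j hj * uiG k hk) = gvu g k j := by
  have hpair := hnorm.1
  have hσ := normalized_sigOK hn hnorm
  have h1 : g (unH (by omega : 0 < n)) (uiG k hk) = 1 := hnorm.2.2 k hk
  have h2 : g (unH (by omega : 0 < n)) (uiG j hj) = 1 := hnorm.2.2 j hj
  rw [hpair.g_mul, conjH_unH hn, Zel_uiG hn hk,
    g_add0 hn hpair hσ _ _ _ (Or.inr (an_vinH hn hk)), h1, h2, one_mul, mul_one,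
    gvu_eq hk hj]

lemma g_unH_vij (hnorm : Normalized (Nat.zero_lt_of_lt hn) σH g lam) {j k : Fin n}
    (hjk : j < k) (hk : (k:ℕ)+1 < n) :
    g (unH (Nat.zero_lt_of_lt hn)) (vijG j k hk) = gvu g k j * (gvu g j k)⁻¹ := by
  have hpair := hnorm.1
  have hσ := normalized_sigOK hn hnorm
  have hj : (j:ℕ)+1 < n := by
    have h2 : (j:ℕ) < (k:ℕ) := hjk
    omega
  have e1 := g_unH_uu hn hnorm hj hk
  rw [gen_rel hj hk hjk, hpair.g_mul, g_unH_uu hn hnorm hk hj,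
    conjH_unH hn, g_add0 hn hpair hσ _ _ _ (Or.inr (an_Zel hn _)),
    g_cen_vij hn hpair hσ _ (an_Zel hn _) hjk hk, mul_one] at e1
  exact eq_mul_inv_of_mul_eq e1

end GVals

section HomTriv

variable {n : ℕ}

lemma hom_eq_one_central (φ : Gsub n →* Circle)
    (hv : ∀ (j k : Fin n) (hjk : j < k) (hk : (k:ℕ)+1 < n), φ (vijG j k hk) = 1) :
    ∀ (N : ℕ) (z : Gsub n), (∀ i, (z : G n).u i = 0) →
      (Finset.univ.filter fun p : PairIdx n => (z : G n).v p ≠ 0).card ≤ N → φ z = 1 := by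
  intro N
  induction N with
  | zero =>
      intro z hu hc
      have hfe : (Finset.univ.filter fun p : PairIdx n => (z : G n).v p ≠ 0) = ∅ :=
        Finset.card_eq_zero.mp (Nat.le_zero.mp hc)
      have hz : z = 1 := by
        refine Subtype.ext (G.ext ?_ ?_) <;> funext x
        · exact hu x
        · by_contra hx
          have hx' : (z : G n).v x ≠ 0 := fun h => hx (h.trans rfl)
          have : x ∈ (Finset.univ.filter fun p : PairIdx n => (z : G n).v p ≠ 0) := by
            simp [hx']
          rw [hfe] at this
          exact absurd this (Finset.notMem_empty x)
      rw [hz, map_one]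
  | succ N ih =>
      intro z hu hc
      rcases Finset.eq_empty_or_nonempty
          (Finset.univ.filter fun p : PairIdx n => (z : G n).v p ≠ 0) with he | he
      · exact ih z hu (by rw [he]; simp)
      · obtain ⟨p, hp⟩ := he
        rw [Finset.mem_filter] at hp
        have hpv : (z : G n).v p ≠ 0 := hp.2
        have hk : ((p.1.2 : ℕ))+1 < n := by
          rcases eq_or_ne ((p.1.2 : ℕ)+1) n with h | h
          · exact absurd (Gsub_v z p h) hpv
          · have := p.1.2.isLt; omega
        set c : ℤ := (z : G n).v p with hcdef
        set z' : Gsub n := (vijG p.1.1 p.1.2 hk)^(-c) * z with hz'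
        have hzdec : z = (vijG p.1.1 p.1.2 hk)^(c) * z' := by
          rw [hz', ← mul_assoc, ← zpow_add, add_neg_cancel, zpow_zero, one_mul]
        have hu' : ∀ i, (z' : G n).u i = 0 := by
          intro i
          show ((vijG p.1.1 p.1.2 hk ^ (-c) : Gsub n) : G n).u i + (z : G n).u i = 0
          rw [vijG_zpow_coe hk, hu i]
          show (0:ℤ) + 0 = 0
          ring
        have hv' : ∀ q : PairIdx n, (z' : G n).v q = if q = p then 0 else (z : G n).v q := by
          intro q
          show ((vijG p.1.1 p.1.2 hk ^ (-c) : Gsub n) : G n).v q + (z : G n).v q +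
            ((vijG p.1.1 p.1.2 hk ^ (-c) : Gsub n) : G n).u q.1.1 * (z : G n).u q.1.2 = _
          rw [vijG_zpow_coe hk]
          show (if q.1 = ((p.1.1, p.1.2) : Fin n × Fin n) then -c else 0) + (z : G n).v q +
            0 * (z : G n).u q.1.2 = _
          have hq : (q.1 = ((p.1.1, p.1.2) : Fin n × Fin n)) ↔ q = p := by
            rw [Subtype.ext_iff]
          by_cases hqp : q = p
          · rw [if_pos (hq.mpr hqp), if_pos hqp, hqp, ← hcdef]; ring
          · rw [if_neg (fun h => hqp (hq.mp h)), if_neg hqp]; ring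
        have hsub : (Finset.univ.filter fun q : PairIdx n => (z' : G n).v q ≠ 0) ⊆
            (Finset.univ.filter fun q : PairIdx n => (z : G n).v q ≠ 0).erase p := by
          intro q hq
          rw [Finset.mem_filter] at hq
          rw [Finset.mem_erase, Finset.mem_filter]
          have hq2 := hq.2
          rw [hv' q] at hq2
          by_cases hqp : q = p
          · rw [if_pos hqp] at hq2; exact absurd rfl hq2
          · rw [if_neg hqp] at hq2; exact ⟨hqp, Finset.mem_univ q, hq2⟩
        have hcard : (Finset.univ.filter fun q : PairIdx n => (z' : G n).v q ≠ 0).card ≤ N := by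
          have h1 := Finset.card_le_card hsub
          have h2 : p ∈ (Finset.univ.filter fun q : PairIdx n => (z : G n).v q ≠ 0) := by
            simp only [Finset.mem_filter, Finset.mem_univ, true_and]; exact hpv
          rw [Finset.card_erase_of_mem h2] at h1
          omega
        rw [hzdec, map_mul, map_zpow, hv p.1.1 p.1.2 p.2 hk, one_zpow, one_mul]
        exact ih z' hu' hcard

lemma hom_eq_one (φ : Gsub n →* Circle)
    (hu : ∀ (j : Fin n) (hj : (j:ℕ)+1 < n), φ (uiG j hj) = 1)
    (hv : ∀ (j k : Fin n) (hjk : j < k) (hk : (k:ℕ)+1 < n), φ (vijG j k hk) = 1)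
    (b : Gsub n) : φ b = 1 := by
  suffices h : ∀ (N : ℕ) (b : Gsub n),
      (Finset.univ.filter fun i => (b : G n).u i ≠ 0).card ≤ N → φ b = 1 from
    h _ b le_rfl
  intro N
  induction N with
  | zero =>
      intro b hb
      have hfe : (Finset.univ.filter fun i => (b : G n).u i ≠ 0) = ∅ :=
        Finset.card_eq_zero.mp (Nat.le_zero.mp hb)
      refine hom_eq_one_central φ hv _ b (fun i => ?_) le_rfl
      by_contra hx
      have : i ∈ (Finset.univ.filter fun i => (b : G n).u i ≠ 0) := by simp [hx]
      rw [hfe] at this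
      exact absurd this (Finset.notMem_empty i)
  | succ N ih =>
      intro b hb
      rcases Finset.eq_empty_or_nonempty
          (Finset.univ.filter fun i => (b : G n).u i ≠ 0) with he | he
      · exact ih b (by rw [he]; simp)
      · obtain ⟨j, hj0⟩ := he
        rw [Finset.mem_filter] at hj0
        have hju : (b : G n).u j ≠ 0 := hj0.2
        have hj : ((j : ℕ))+1 < n := by
          rcases eq_or_ne ((j : ℕ)+1) n with h | h
          · exact absurd (Gsub_u b j h) hju
          · have := j.isLt; omega
        set c : ℤ := (b : G n).u j with hcdef
        set b' : Gsub n := (uiG j hj)^(-c) * b with hb'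
        have hbdec : b = (uiG j hj)^(c) * b' := by
          rw [hb', ← mul_assoc, ← zpow_add, add_neg_cancel, zpow_zero, one_mul]
        have hu' : ∀ i, (b' : G n).u i = if i = j then 0 else (b : G n).u i := by
          intro i
          show ((uiG j hj ^ (-c) : Gsub n) : G n).u i + (b : G n).u i = _
          rw [uiG_zpow_coe hj]
          show (if i = j then -c else 0) + (b : G n).u i = _
          by_cases hij : i = j
          · rw [if_pos hij, if_pos hij, hij, ← hcdef]; ring
          · rw [if_neg hij, if_neg hij]; ring
        have hsub : (Finset.univ.filter fun i => (b' : G n).u i ≠ 0) ⊆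
            (Finset.univ.filter fun i => (b : G n).u i ≠ 0).erase j := by
          intro i hi
          rw [Finset.mem_filter] at hi
          rw [Finset.mem_erase, Finset.mem_filter]
          have hi2 := hi.2
          rw [hu' i] at hi2
          by_cases hij : i = j
          · rw [if_pos hij] at hi2; exact absurd rfl hi2
          · rw [if_neg hij] at hi2; exact ⟨hij, Finset.mem_univ i, hi2⟩
        have hcard : (Finset.univ.filter fun i => (b' : G n).u i ≠ 0).card ≤ N := by
          have h1 := Finset.card_le_card hsub
          have h2 : j ∈ (Finset.univ.filter fun i => (b : G n).u i ≠ 0) := by simp only [Finset.mem_filter, Finset.mem_univ, true_and]; exact hju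
          rw [Finset.card_erase_of_mem h2] at h1
          omega
        rw [hbdec, map_mul, map_zpow, hu j hj, one_zpow, one_mul]
        exact ih b' hcard

end HomTriv

section CenFormula

variable {n : ℕ} {σH : Hsub n → Hsub n → Circle} {g : Hsub n → Gsub n → Circle}
  {lam : Fin n → Circle} (hn : 2 ≤ n)

lemma buu_uiG {j : Fin n} (hj : (j:ℕ)+1 < n) (k : Fin n) :
    buu (uiG j hj) k = if k = j then 1 else 0 := rfl

lemma buu_vijG' {i j : Fin n} (hj : (j:ℕ)+1 < n) (k : Fin n) :
    buu (vijG i j hj) k = 0 := rfl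

lemma buu_mul (b b' : Gsub n) (k : Fin n) : buu (b * b') k = buu b k + buu b' k := rfl

lemma avv_zero (x : Hsub n) {k : Fin n} (hk : ¬ ((k:ℕ)+1 < n)) : avv hn x k = 0 := by
  unfold avv vc
  rw [dif_neg]
  intro hlt
  have h1 : (k:ℕ) < n - 1 := hlt
  omega

lemma g_vinH (hpair : AdmissiblePair n σH g) (hσ : sigOK hn σH lam)
    {i : Fin n} (hi : (i:ℕ)+1 < n) (b : Gsub n) :
    g (vinH i hi) b = ∏ j ∈ Fi n, gvu g i j ^ buu b j := by
  have hmul : ∀ b b' : Gsub n,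
      g (vinH i hi) (b * b') * (∏ j ∈ Fi n, gvu g i j ^ buu (b * b') j)⁻¹ =
      (g (vinH i hi) b * (∏ j ∈ Fi n, gvu g i j ^ buu b j)⁻¹) *
      (g (vinH i hi) b' * (∏ j ∈ Fi n, gvu g i j ^ buu b' j)⁻¹) := by
    intro b b'
    rw [g_hom_cen hn hpair _ (an_vinH hn hi)]
    have hp : ∏ j ∈ Fi n, gvu g i j ^ buu (b * b') j =
        (∏ j ∈ Fi n, gvu g i j ^ buu b j) * (∏ j ∈ Fi n, gvu g i j ^ buu b' j) := by
      rw [← Finset.prod_mul_distrib]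
      exact Finset.prod_congr rfl fun j _ => by rw [buu_mul, zpow_add]
    rw [hp, mul_inv]
    exact mul_mul_mul_comm _ _ _ _
  have h1 := hom_eq_one (MonoidHom.mk'
      (fun b => g (vinH i hi) b * (∏ j ∈ Fi n, gvu g i j ^ buu b j)⁻¹) hmul)
      (fun j hj => ?_) (fun j k hjk hk => ?_) b
  · exact mul_inv_eq_one.mp h1
  · show g (vinH i hi) (uiG j hj) * (∏ k ∈ Fi n, gvu g i k ^ buu (uiG j hj) k)⁻¹ = 1
    have hp : ∏ k ∈ Fi n, gvu g i k ^ buu (uiG j hj) k = gvu g i j := by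
      have h2 : ∀ k ∈ Fi n, gvu g i k ^ buu (uiG j hj) k =
          if k = j then gvu g i k else 1 := by
        intro k _
        rw [buu_uiG]
        by_cases hkj : k = j
        · rw [if_pos hkj, if_pos hkj, zpow_one]
        · rw [if_neg hkj, if_neg hkj, zpow_zero]
      rw [Finset.prod_congr rfl h2, Finset.prod_ite_eq' (Fi n) j, if_pos (mem_Fi.mpr hj)]
    rw [hp, ← gvu_eq (g := g) hi hj, mul_inv_cancel]
  · show g (vinH i hi) (vijG j k hk) * (∏ l ∈ Fi n, gvu g i l ^ buu (vijG j k hk) l)⁻¹ = 1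
    have hp : ∏ l ∈ Fi n, gvu g i l ^ buu (vijG j k hk) l = 1 := by
      refine Finset.prod_eq_one fun l _ => ?_
      rw [buu_vijG', zpow_zero]
    rw [hp, g_cen_vij hn hpair hσ _ (an_vinH hn hi) hjk hk, inv_one, mul_one]

lemma g_cen_formula (hpair : AdmissiblePair n σH g) (hσ : sigOK hn σH lam) :
    ∀ (N : ℕ) (a : Hsub n), an hn a = 0 →
      (Finset.univ.filter fun i : Fin n => avv hn a i ≠ 0).card ≤ N →
      ∀ b : Gsub n,
        g a b = ∏ q ∈ Fi n ×ˢ Fi n, gvu g q.1 q.2 ^ (avv hn a q.1 * buu b q.2) := by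
  intro N
  induction N with
  | zero =>
      intro a ha hc b
      have hfe : (Finset.univ.filter fun i : Fin n => avv hn a i ≠ 0) = ∅ :=
        Finset.card_eq_zero.mp (Nat.le_zero.mp hc)
      have hav : ∀ i : Fin n, avv hn a i = 0 := by
        intro i
        by_contra hx
        have : i ∈ (Finset.univ.filter fun i : Fin n => avv hn a i ≠ 0) := by simp [hx]
        rw [hfe] at this
        exact absurd this (Finset.notMem_empty i)
      have ha1 : a = 1 := by
        refine Subtype.ext (G.ext ?_ ?_) <;> funext x
        · show (a : G n).u x = 0
          rcases eq_or_ne ((x:ℕ)+1) n with h | h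
          · have hx : x = laF hn := Fin.ext (show ((x:ℕ)) = n-1 by omega)
            rw [hx]; exact ha
          · exact Hsub_u a x (by have := x.isLt; omega)
        · show (a : G n).v x = 0
          rcases eq_or_ne ((x.1.2:ℕ)+1) n with h | h
          · have h1 : (x.1.1:ℕ)+1 < n := by
              have h2 : (x.1.1:ℕ) < (x.1.2:ℕ) := x.2
              omega
            have hx : x = ⟨(x.1.1, laF hn), lt_laF hn h1⟩ := by
              refine Subtype.ext (Prod.ext rfl (Fin.ext (show ((x.1.2:ℕ)) = n-1 by omega)))
            rw [hx, ← avv_eq hn a h1]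
            exact hav x.1.1
          · exact Hsub_v a x (by have := x.1.2.isLt; omega)
      have hav1 : ∀ i : Fin n, avv hn (1 : Hsub n) i = 0 := fun i => by
        rw [← ha1]; exact hav i
      rw [ha1, hpair.g_one_left]
      refine (Finset.prod_eq_one fun q _ => ?_).symm
      rw [hav1 q.1, zero_mul, zpow_zero]
  | succ N ih =>
      intro a ha hc b
      rcases Finset.eq_empty_or_nonempty
          (Finset.univ.filter fun i : Fin n => avv hn a i ≠ 0) with he | he
      · exact ih a ha (by rw [he]; simp) b
      · obtain ⟨i, hi0⟩ := he
        rw [Finset.mem_filter] at hi0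
        have hia : avv hn a i ≠ 0 := hi0.2
        have hi : (i:ℕ)+1 < n := by
          by_contra hx
          exact hia (avv_zero hn a hx)
        set c : ℤ := avv hn a i with hcdef
        set a' : Hsub n := (vinH i hi)^(-c) * a with ha'def
        have hadec : a = (vinH i hi)^(c) * a' := by
          rw [ha'def, ← mul_assoc, ← zpow_add, add_neg_cancel, zpow_zero, one_mul]
        have han' : an hn a' = 0 := by
          rw [ha'def, an_mul, an_vinH_pow, ha, add_zero]
        have hav' : ∀ k : Fin n, avv hn a' k = if k = i then 0 else avv hn a k := by
          intro k
          by_cases hk : (k:ℕ)+1 < n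
          · rw [ha'def, avv_mul hn _ _ hk, avv_vinH_pow hn hi (-c) hk]
            by_cases hki : k = i
            · rw [if_pos hki, if_pos hki, hki, ← hcdef]; ring
            · rw [if_neg hki, if_neg hki]; ring
          · rw [avv_zero hn _ hk]
            have hki : k ≠ i := fun hc' => hk (hc' ▸ hi)
            rw [if_neg hki, avv_zero hn _ hk]
        have hsub : (Finset.univ.filter fun k : Fin n => avv hn a' k ≠ 0) ⊆
            (Finset.univ.filter fun k : Fin n => avv hn a k ≠ 0).erase i := by
          intro k hk
          rw [Finset.mem_filter] at hk
          rw [Finset.mem_erase, Finset.mem_filter]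
          have hk2 := hk.2
          rw [hav' k] at hk2
          by_cases hki : k = i
          · rw [if_pos hki] at hk2; exact absurd rfl hk2
          · rw [if_neg hki] at hk2; exact ⟨hki, Finset.mem_univ k, hk2⟩
        have hcard : (Finset.univ.filter fun k : Fin n => avv hn a' k ≠ 0).card ≤ N := by
          have h1 := Finset.card_le_card hsub
          have h2 : i ∈ (Finset.univ.filter fun k : Fin n => avv hn a k ≠ 0) := by
            simp only [Finset.mem_filter, Finset.mem_univ, true_and]; exact hia
          rw [Finset.card_erase_of_mem h2] at h1
          omega
        have hpow : ∀ m : ℤ, g ((vinH i hi)^m) b = (g (vinH i hi) b) ^ m := by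
          have hadd : ∀ x y : ℤ, g ((vinH i hi)^(x+y)) b =
              g ((vinH i hi)^x) b * g ((vinH i hi)^y) b := by
            intro x y
            rw [zpow_add]
            exact g_add0 hn hpair hσ _ _ _ (Or.inl (an_vinH_pow hn hi x))
          intro m
          have h3 := int_hom_pow (f := fun c => g (vinH i hi ^ c) b) hadd m
          simpa using h3
        have hgab : g a b = (g (vinH i hi) b) ^ c * g a' b := by
          rw [hadec, g_add0 hn hpair hσ _ _ _ (Or.inl (an_vinH_pow hn hi c)), hpow]
        rw [hgab, ih a' han' hcard b, g_vinH hn hpair hσ hi b]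
        have key : ∀ q ∈ Fi n ×ˢ Fi n,
            gvu g q.1 q.2 ^ (avv hn a q.1 * buu b q.2) =
            gvu g q.1 q.2 ^ (avv hn a' q.1 * buu b q.2) *
              (if q.1 = i then gvu g q.1 q.2 ^ (c * buu b q.2) else 1) := by
          intro q _
          by_cases hqi : q.1 = i
          · rw [if_pos hqi, ← zpow_add, hav' q.1, if_pos hqi]
            congr 1
            rw [hqi]
            ring
          · rw [if_neg hqi, hav' q.1, if_neg hqi, mul_one]
        rw [Finset.prod_congr rfl key, Finset.prod_mul_distrib]
        have hsecond : (∏ q ∈ Fi n ×ˢ Fi n,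
            (if q.1 = i then gvu g q.1 q.2 ^ (c * buu b q.2) else 1)) =
            ∏ y ∈ Fi n, gvu g i y ^ (c * buu b y) := by
          rw [Finset.prod_product]
          have h2 : ∀ x ∈ Fi n, (∏ y ∈ Fi n,
              if x = i then gvu g x y ^ (c * buu b y) else 1) =
              if x = i then ∏ y ∈ Fi n, gvu g i y ^ (c * buu b y) else 1 := by
            intro x _
            by_cases hx : x = i
            · rw [if_pos hx]
              rw [hx]
              exact Finset.prod_congr rfl fun y _ => if_pos rfl
            · rw [if_neg hx]
              exact Finset.prod_eq_one fun y _ => if_neg hx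
          rw [Finset.prod_congr rfl h2, Finset.prod_ite_eq' (Fi n) i, if_pos (mem_Fi.mpr hi)]
        rw [hsecond]
        have hfirst : (∏ j ∈ Fi n, gvu g i j ^ buu b j) ^ c =
            ∏ y ∈ Fi n, gvu g i y ^ (c * buu b y) := by
          rw [← Finset.prod_zpow]
          refine Finset.prod_congr rfl fun y _ => ?_
          rw [← zpow_mul]
          congr 1
          ring
        rw [hfirst]
        exact mul_comm _ _

end CenFormula

section SquareSplit

variable {n : ℕ}

lemma P2_eq : P2 n = (Fi n ×ˢ Fi n).filter (fun q => q.1 < q.2) := by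
  ext q
  simp only [mem_P2, Finset.mem_filter, Finset.mem_product, mem_Fi]
  constructor
  · rintro ⟨h1, h2⟩
    have h3 : (q.1:ℕ) < (q.2:ℕ) := h1
    exact ⟨⟨by omega, h2⟩, h1⟩
  · rintro ⟨⟨h1, h2⟩, h3⟩
    exact ⟨h3, h2⟩

lemma prod_square_split (f : Fin n × Fin n → Circle) :
    ∏ q ∈ Fi n ×ˢ Fi n, f q =
      (∏ p ∈ P2 n, f p * f (p.2, p.1)) * ∏ j ∈ Fi n, f (j, j) := by
  rw [← Finset.prod_filter_mul_prod_filter_not (Fi n ×ˢ Fi n) (fun q => q.1 < q.2) f]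
  rw [← Finset.prod_filter_mul_prod_filter_not
    ((Fi n ×ˢ Fi n).filter (fun q => ¬ q.1 < q.2)) (fun q => q.2 < q.1) f]
  have e1 : (Fi n ×ˢ Fi n).filter (fun q => q.1 < q.2) = P2 n := P2_eq.symm
  have e2 : ∏ q ∈ ((Fi n ×ˢ Fi n).filter (fun q => ¬ q.1 < q.2)).filter
      (fun q => q.2 < q.1), f q = ∏ p ∈ P2 n, f (p.2, p.1) := by
    refine Finset.prod_nbij' (fun q => (q.2, q.1)) (fun p => (p.2, p.1)) ?_ ?_ ?_ ?_ ?_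
    · intro q hq
      simp only [Finset.mem_filter, Finset.mem_product, mem_Fi] at hq
      rw [mem_P2]
      exact ⟨hq.2, hq.1.1.1⟩
    · intro p hp
      rw [mem_P2] at hp
      simp only [Finset.mem_filter, Finset.mem_product, mem_Fi]
      have h3 : (p.1:ℕ) < (p.2:ℕ) := hp.1
      exact ⟨⟨⟨hp.2, by omega⟩, lt_asymm hp.1⟩, hp.1⟩
    · intro q _; rfl
    · intro p _; rfl
    · intro q _; rfl
  have e3 : ∏ q ∈ ((Fi n ×ˢ Fi n).filter (fun q => ¬ q.1 < q.2)).filter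
      (fun q => ¬ q.2 < q.1), f q = ∏ j ∈ Fi n, f (j, j) := by
    refine Finset.prod_nbij' (fun q => q.1) (fun j => (j, j)) ?_ ?_ ?_ ?_ ?_
    · intro q hq
      simp only [Finset.mem_filter, Finset.mem_product] at hq
      exact hq.1.1.1
    · intro j hj
      simp only [Finset.mem_filter, Finset.mem_product]
      exact ⟨⟨⟨hj, hj⟩, lt_irrefl j⟩, lt_irrefl j⟩
    · intro q hq
      simp only [Finset.mem_filter, Finset.mem_product] at hq
      have h : q.2 = q.1 := le_antisymm (not_lt.mp hq.1.2) (not_lt.mp hq.2)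
      exact Prod.ext rfl h.symm
    · intro j _
      rfl
    · intro q hq
      simp only [Finset.mem_filter, Finset.mem_product] at hq
      have h : q.2 = q.1 := le_antisymm (not_lt.mp hq.1.2) (not_lt.mp hq.2)
      have h2 : q = (q.1, q.1) := Prod.ext rfl h
      rw [← h2]
  rw [e1, e2, e3, ← mul_assoc, ← Finset.prod_mul_distrib]

end SquareSplit

section FbSec

variable {n : ℕ} {σH : Hsub n → Hsub n → Circle} {g : Hsub n → Gsub n → Circle}
  {lam : Fin n → Circle} (hn : 2 ≤ n)

/-- The value of `g(u_n, ·)`. -/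
noncomputable def Fb (g : Hsub n → Gsub n → Circle) (b : Gsub n) : Circle :=
  (∏ p ∈ P2 n, gvu g p.2 p.1 ^ bvv b p.1 p.2 *
    gvu g p.1 p.2 ^ (buu b p.1 * buu b p.2 - bvv b p.1 p.2)) *
  ∏ j ∈ Fi n, gvu g j j ^ (buu b j * (buu b j - 1) / 2)

lemma bvv_mul (b b' : Gsub n) {k l : Fin n} (hkl : k < l) :
    bvv (b * b') k l = bvv b k l + bvv b' k l + buu b k * buu b' l := by
  rw [bvv_eq _ hkl, bvv_eq _ hkl, bvv_eq _ hkl]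
  rfl

lemma half_add (x y : ℤ) : (x + y)*((x + y) - 1)/2 = x*(x-1)/2 + y*(y-1)/2 + x*y := by
  obtain ⟨s, hs⟩ := Int.even_mul_succ_self (x-1)
  obtain ⟨t, ht⟩ := Int.even_mul_succ_self (y-1)
  have h1 : x*(x-1) = 2*s := by nlinarith [hs]
  have h2 : y*(y-1) = 2*t := by nlinarith [ht]
  have h3 : (x+y)*((x+y)-1) = 2*(s+t+x*y) := by nlinarith [hs, ht]
  rw [h1, h2, h3, Int.mul_ediv_cancel_left _ (by norm_num : (2:ℤ) ≠ 0),
    Int.mul_ediv_cancel_left _ (by norm_num : (2:ℤ) ≠ 0),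
    Int.mul_ediv_cancel_left _ (by norm_num : (2:ℤ) ≠ 0)]

lemma cg6 {M : Type*} [CommMonoid M] (a b c d e f : M) :
    ((a*b)*(c*d))*(e*f) = ((a*c)*e)*((b*d)*f) := by
  simp only [mul_assoc, mul_left_comm, mul_comm]

set_option maxHeartbeats 1000000 in
lemma Fb_cocycle (b b' : Gsub n) :
    Fb g (b * b') = Fb g b * Fb g b' *
      ∏ q ∈ Fi n ×ˢ Fi n, gvu g q.1 q.2 ^ (buu b' q.1 * buu b q.2) := by
  unfold Fb
  have hsq : ∏ q ∈ Fi n ×ˢ Fi n, gvu g q.1 q.2 ^ (buu b' q.1 * buu b q.2) =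
      (∏ p ∈ P2 n, gvu g p.1 p.2 ^ (buu b' p.1 * buu b p.2) *
        gvu g p.2 p.1 ^ (buu b' p.2 * buu b p.1)) *
      ∏ j ∈ Fi n, gvu g j j ^ (buu b' j * buu b j) := by
    rw [prod_square_split (fun q => gvu g q.1 q.2 ^ (buu b' q.1 * buu b q.2))]
  have hP : ∀ p ∈ P2 n,
      gvu g p.2 p.1 ^ bvv (b * b') p.1 p.2 *
        gvu g p.1 p.2 ^ (buu (b * b') p.1 * buu (b * b') p.2 - bvv (b * b') p.1 p.2) =
      (gvu g p.2 p.1 ^ bvv b p.1 p.2 *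
          gvu g p.1 p.2 ^ (buu b p.1 * buu b p.2 - bvv b p.1 p.2)) *
      (gvu g p.2 p.1 ^ bvv b' p.1 p.2 *
          gvu g p.1 p.2 ^ (buu b' p.1 * buu b' p.2 - bvv b' p.1 p.2)) *
      (gvu g p.1 p.2 ^ (buu b' p.1 * buu b p.2) *
          gvu g p.2 p.1 ^ (buu b' p.2 * buu b p.1)) := by
    intro p hp
    have hlt := (mem_P2.mp hp).1
    rw [bvv_mul b b' hlt, buu_mul, buu_mul]
    have ex : bvv b p.1 p.2 + bvv b' p.1 p.2 + buu b p.1 * buu b' p.2 =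
        bvv b p.1 p.2 + (bvv b' p.1 p.2 + buu b' p.2 * buu b p.1) := by ring
    have ey : (buu b p.1 + buu b' p.1) * (buu b p.2 + buu b' p.2) -
        (bvv b p.1 p.2 + bvv b' p.1 p.2 + buu b p.1 * buu b' p.2) =
        (buu b p.1 * buu b p.2 - bvv b p.1 p.2) +
          ((buu b' p.1 * buu b' p.2 - bvv b' p.1 p.2) + buu b' p.1 * buu b p.2) := by ring
    rw [ey, ex, zpow_add, zpow_add, zpow_add, zpow_add]
    simp only [mul_assoc, mul_left_comm, mul_comm]
  have hD : ∀ j ∈ Fi n,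
      gvu g j j ^ (buu (b * b') j * (buu (b * b') j - 1) / 2) =
      gvu g j j ^ (buu b j * (buu b j - 1) / 2) *
        gvu g j j ^ (buu b' j * (buu b' j - 1) / 2) *
        gvu g j j ^ (buu b' j * buu b j) := by
    intro j _
    rw [buu_mul]
    have h := half_add (buu b j) (buu b' j)
    rw [mul_comm (buu b j) (buu b' j)] at h
    rw [h, zpow_add, zpow_add]
  rw [hsq, cg6, ← Finset.prod_mul_distrib, ← Finset.prod_mul_distrib,
    ← Finset.prod_mul_distrib, ← Finset.prod_mul_distrib]
  show _ = _
  congr 1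
  · exact Finset.prod_congr rfl hP
  · exact Finset.prod_congr rfl hD

lemma buu_sq_zero {j : Fin n} (hj : (j:ℕ)+1 < n) {p : Fin n × Fin n} (hlt : p.1 < p.2) :
    buu (uiG j hj) p.1 * buu (uiG j hj) p.2 = 0 := by
  rw [buu_uiG, buu_uiG]
  rcases eq_or_ne p.1 j with h | h
  · have h2 : p.2 ≠ j := by
      intro hc
      rw [h, hc] at hlt
      exact absurd hlt (lt_irrefl j)
    rw [if_neg h2, mul_zero]
  · rw [if_neg h, zero_mul]

lemma bvv_uiG0 {j : Fin n} (hj : (j:ℕ)+1 < n) (k l : Fin n) : bvv (uiG j hj) k l = 0 := by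
  unfold bvv vc
  split <;> rfl

lemma Fb_uiG {j : Fin n} (hj : (j:ℕ)+1 < n) : Fb g (uiG j hj) = 1 := by
  unfold Fb
  rw [Finset.prod_eq_one, Finset.prod_eq_one, mul_one]
  · intro k _
    rw [buu_uiG]
    rcases eq_or_ne k j with h | h
    · rw [if_pos h]; norm_num
    · rw [if_neg h]; norm_num
  · intro p hp
    rw [bvv_uiG0, buu_sq_zero hj (mem_P2.mp hp).1]
    norm_num

lemma bvv_vijG {j k : Fin n} (hk : (k:ℕ)+1 < n) {l m : Fin n} (hlm : l < m) :
    bvv (vijG j k hk) l m = if (l, m) = (j, k) then 1 else 0 := by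
  rw [bvv_eq _ hlm]
  rfl

lemma Fb_vijG {j k : Fin n} (hjk : j < k) (hk : (k:ℕ)+1 < n) :
    Fb g (vijG j k hk) = gvu g k j * (gvu g j k)⁻¹ := by
  unfold Fb
  have hD : ∏ l ∈ Fi n, gvu g l l ^ (buu (vijG j k hk) l * (buu (vijG j k hk) l - 1) / 2) =
      1 := by
    refine Finset.prod_eq_one fun l _ => ?_
    rw [buu_vijG']
    norm_num
  rw [hD, mul_one]
  have hmem : ((j, k) : Fin n × Fin n) ∈ P2 n := mem_P2.mpr ⟨hjk, hk⟩
  rw [Finset.prod_eq_single (j, k)]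
  · rw [bvv_vijG hk hjk, if_pos rfl, buu_vijG', buu_vijG']
    norm_num
  · intro p hp hne
    rw [bvv_vijG hk (mem_P2.mp hp).1, buu_vijG', buu_vijG',
      if_neg (fun hc => hne (by rw [← hc]))]
    norm_num
  · intro hc
    exact absurd hmem hc


lemma cg_aux {M : Type*} [CommGroup M] (X Y T A B : M) :
    X * Y * T * (A * B * T)⁻¹ = (X * A⁻¹) * (Y * B⁻¹) := by
  have h : X * Y * T * (A * B * T)⁻¹ = (X * A⁻¹) * (Y * B⁻¹) * (T * T⁻¹) := by
    rw [mul_inv, mul_inv]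
    simp only [mul_assoc, mul_left_comm, mul_comm]
  rw [h, mul_inv_cancel, mul_one]

lemma g_unH_cocycle (hpair : AdmissiblePair n σH g) (hσ : sigOK hn σH lam) (b b' : Gsub n) :
    g (unH (Nat.zero_lt_of_lt hn)) (b * b') =
      g (unH (Nat.zero_lt_of_lt hn)) b * g (unH (Nat.zero_lt_of_lt hn)) b' *
      ∏ q ∈ Fi n ×ˢ Fi n, gvu g q.1 q.2 ^ (buu b' q.1 * buu b q.2) := by
  rw [hpair.g_mul, conjH_unH hn, g_add0 hn hpair hσ _ _ _ (Or.inr (an_Zel hn b')),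
    g_cen_formula hn hpair hσ _ (Zel hn b') (an_Zel hn b') le_rfl b]
  have hc : ∀ q ∈ Fi n ×ˢ Fi n,
      gvu g q.1 q.2 ^ (avv hn (Zel hn b') q.1 * buu b q.2) =
      gvu g q.1 q.2 ^ (buu b' q.1 * buu b q.2) := by
    intro q hq
    rw [avv_Zel hn b' (mem_Fi.mp (Finset.mem_product.mp hq).1)]
  rw [Finset.prod_congr rfl hc]
  exact mul_right_comm _ _ _

lemma g_unH_eq_Fb (hnorm : Normalized (Nat.zero_lt_of_lt hn) σH g lam) (b : Gsub n) :
    g (unH (Nat.zero_lt_of_lt hn)) b = Fb g b := by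
  have hpair := hnorm.1
  have hσ := normalized_sigOK hn hnorm
  have hmul : ∀ b b' : Gsub n,
      g (unH (by omega : 0 < n)) (b * b') * (Fb g (b * b'))⁻¹ =
      (g (unH (by omega)) b * (Fb g b)⁻¹) * (g (unH (by omega)) b' * (Fb g b')⁻¹) := by
    intro b b'
    rw [g_unH_cocycle hn hpair hσ, Fb_cocycle]
    exact cg_aux _ _ _ _ _
  have h1 := hom_eq_one (MonoidHom.mk'
      (fun b => g (unH (by omega : 0 < n)) b * (Fb g b)⁻¹) hmul)
      (fun j hj => ?_) (fun j k hjk hk => ?_) b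
  · exact mul_inv_eq_one.mp h1
  · show g (unH (by omega)) (uiG j hj) * (Fb g (uiG j hj))⁻¹ = 1
    have h2 : g (unH (by omega : 0 < n)) (uiG j hj) = 1 := hnorm.2.2 j hj
    rw [h2, Fb_uiG hj, inv_one, mul_one]
  · show g (unH (by omega)) (vijG j k hk) * (Fb g (vijG j k hk))⁻¹ = 1
    rw [g_unH_vij hn hnorm hjk hk, Fb_vijG hjk hk, mul_inv_cancel]

end FbSec

section Final

variable {n : ℕ} {σH : Hsub n → Hsub n → Circle} {g : Hsub n → Gsub n → Circle}
  {lam : Fin n → Circle} (hn : 2 ≤ n)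

lemma an_unH : an hn (unH (Nat.zero_lt_of_lt hn)) = 1 := by
  unfold an
  exact if_pos rfl

lemma cginv {M : Type*} [Group M] (P X Q : M) :
    P⁻¹ * ((P * (X * Q)) * Q⁻¹) = X := by
  rw [mul_assoc P (X*Q) Q⁻¹, mul_inv_cancel_right, inv_mul_cancel_left]

lemma cgr {M : Type*} [CommGroup M] (P Gk L G1 : M) :
    P * ((Gk * L) * G1) = (Gk * G1) * (L * P) := by
  simp only [mul_assoc, mul_left_comm, mul_comm]

lemma g_unH_pow (hpair : AdmissiblePair n σH g) (hσ : sigOK hn σH lam) (b : Gsub n)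
    (m : ℤ) :
    g ((unH (Nat.zero_lt_of_lt hn)) ^ m) b =
      (g (unH (Nat.zero_lt_of_lt hn)) b) ^ m *
        ∏ j ∈ Fi n, lam j ^ (buu b j * (m * (m - 1) / 2)) := by
  have R : ∀ m : ℤ, g ((unH (by omega : 0 < n)) ^ (m+1)) b =
      (∏ i ∈ Fi n, lam i ^ (m * buu b i)) *
        (g ((unH (by omega : 0 < n)) ^ m) b * g (unH (by omega)) b) := by
    intro m
    rw [zpow_add_one, g_add' hn hpair hσ]
    congr 1
    refine Finset.prod_congr rfl fun i _ => ?_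
    rw [an_unH_pow, an_unH, mul_one]
  induction m using Int.induction_on with
  | zero =>
      rw [zpow_zero, zpow_zero, hpair.g_one_left, one_mul]
      refine (Finset.prod_eq_one fun j _ => ?_).symm
      norm_num
  | succ k ih =>
      rw [R k, ih]
      have he : ∀ j ∈ Fi n, lam j ^ (buu b j * (((k:ℤ)+1) * (((k:ℤ)+1) - 1) / 2)) =
          lam j ^ (buu b j * ((k:ℤ) * ((k:ℤ) - 1) / 2)) * lam j ^ ((k:ℤ) * buu b j) := by
        intro j _
        rw [← zpow_add]
        congr 1
        rw [show ((k:ℤ)+1) - 1 = (k:ℤ) by ring, half_succ]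
        ring
      rw [Finset.prod_congr rfl he, Finset.prod_mul_distrib, zpow_add_one]
      exact cgr _ _ _ _
  | pred k ih =>
      have hR := R (-(k:ℤ)-1)
      rw [show (-(k:ℤ)-1) + 1 = -(k:ℤ) by ring] at hR
      have hX : g ((unH (by omega : 0 < n)) ^ (-(k:ℤ)-1)) b =
          (∏ i ∈ Fi n, lam i ^ ((-(k:ℤ)-1) * buu b i))⁻¹ *
            (g ((unH (by omega : 0 < n)) ^ (-(k:ℤ))) b * (g (unH (by omega)) b)⁻¹) := by
        rw [hR]
        exact (cginv _ _ _).symm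
      rw [hX, ih]
      have hM : ∀ j ∈ Fi n,
          lam j ^ (buu b j * ((-(k:ℤ)-1) * ((-(k:ℤ)-1) - 1) / 2)) =
          lam j ^ (buu b j * ((-(k:ℤ)) * ((-(k:ℤ)) - 1) / 2)) *
            (lam j ^ ((-(k:ℤ)-1) * buu b j))⁻¹ := by
        intro j _
        rw [← zpow_neg, ← zpow_add]
        congr 1
        rw [show ((-(k:ℤ)-1) - 1) = (-(k:ℤ)-2) by ring, half_pred]
        ring
      rw [Finset.prod_congr rfl hM, Finset.prod_mul_distrib, Finset.prod_inv_distrib,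
        zpow_sub_one]
      exact cgr _ _ _ _

lemma cg5 {M : Type*} [CommMonoid M] (p1 d1 l p2 d2 : M) :
    ((p1*d1)*l)*(p2*d2) = ((p1*p2)*(d1*d2))*l := by
  simp only [mul_assoc, mul_left_comm, mul_comm]

lemma g_formula (hnorm : Normalized (Nat.zero_lt_of_lt hn) σH g lam) (a : Hsub n)
    (b : Gsub n) :
    g a b =
      (∏ p ∈ P2 n, gvu g p.2 p.1 ^ (avv hn a p.2 * buu b p.1 + an hn a * bvv b p.1 p.2) *
        gvu g p.1 p.2 ^ (avv hn a p.1 * buu b p.2 +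
          an hn a * (buu b p.1 * buu b p.2 - bvv b p.1 p.2))) *
      (∏ j ∈ Fi n, gvu g j j ^ (avv hn a j * buu b j +
        an hn a * (buu b j * (buu b j - 1) / 2))) *
      ∏ j ∈ Fi n, lam j ^ (buu b j * (an hn a * (an hn a - 1) / 2)) := by
  have hpair := hnorm.1
  have hσ := normalized_sigOK hn hnorm
  have hadec : a = (unH (by omega : 0 < n)) ^ (an hn a) *
      ((unH (by omega : 0 < n)) ^ (-(an hn a)) * a) := by
    rw [← mul_assoc, ← zpow_add, add_neg_cancel, zpow_zero, one_mul]
  set a0 : Hsub n := (unH (by omega : 0 < n)) ^ (-(an hn a)) * a with ha0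
  have han0 : an hn a0 = 0 := by
    rw [ha0, an_mul, an_unH_pow]
    ring
  have hav0 : ∀ k, avv hn a0 k = avv hn a k := by
    intro k
    by_cases hk : (k:ℕ)+1 < n
    · rw [ha0, avv_mul hn _ _ hk, avv_unH_pow, zero_add]
    · rw [avv_zero hn _ hk, avv_zero hn _ hk]
  conv_lhs => rw [hadec]
  rw [g_add0 hn hpair hσ _ _ _ (Or.inr han0), g_unH_pow hn hpair hσ,
    g_cen_formula hn hpair hσ _ a0 han0 le_rfl b, g_unH_eq_Fb hn hnorm]
  have hsq0 : ∏ q ∈ Fi n ×ˢ Fi n, gvu g q.1 q.2 ^ (avv hn a0 q.1 * buu b q.2) =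
      ∏ q ∈ Fi n ×ˢ Fi n, gvu g q.1 q.2 ^ (avv hn a q.1 * buu b q.2) :=
    Finset.prod_congr rfl fun q _ => by rw [hav0]
  rw [hsq0, prod_square_split (fun q => gvu g q.1 q.2 ^ (avv hn a q.1 * buu b q.2))]
  have hFbc : (Fb g b) ^ (an hn a) =
      (∏ p ∈ P2 n, gvu g p.2 p.1 ^ (an hn a * bvv b p.1 p.2) *
        gvu g p.1 p.2 ^ (an hn a * (buu b p.1 * buu b p.2 - bvv b p.1 p.2))) *
      ∏ j ∈ Fi n, gvu g j j ^ (an hn a * (buu b j * (buu b j - 1) / 2)) := by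
    unfold Fb
    rw [mul_zpow, ← Finset.prod_zpow, ← Finset.prod_zpow]
    have hc : ∀ (x : Circle) (e : ℤ), (x ^ e) ^ (an hn a) = x ^ (an hn a * e) := by
      intro x e
      rw [← zpow_mul, mul_comm]
    congr 1
    · exact Finset.prod_congr rfl fun p _ => by rw [mul_zpow, hc, hc]
    · exact Finset.prod_congr rfl fun j _ => by rw [hc]
  rw [hFbc, cg5, ← Finset.prod_mul_distrib, ← Finset.prod_mul_distrib]
  congr 1
  congr 1
  · refine Finset.prod_congr rfl fun p _ => ?_
    rw [zpow_add, zpow_add]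
    simp only [mul_assoc, mul_left_comm, mul_comm]
  · refine Finset.prod_congr rfl fun j _ => ?_
    rw [zpow_add]
    exact mul_comm _ _

lemma tau_formula (hnorm : Normalized (Nat.zero_lt_of_lt hn) σH g lam)
    (a a' : Hsub n) (b b' : Gsub n) :
    tauN σH g ((a' : G n) * (b : G n)) ((a : G n) * (b' : G n)) =
      (∏ p ∈ P2 n, gvu g p.2 p.1 ^ (avv hn a p.2 * buu b p.1 + an hn a * bvv b p.1 p.2) *
        gvu g p.1 p.2 ^ (avv hn a p.1 * buu b p.2 +
          an hn a * (buu b p.1 * buu b p.2 - bvv b p.1 p.2))) *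
      (∏ j ∈ Fi n, gvu g j j ^ (avv hn a j * buu b j +
        an hn a * (buu b j * (buu b j - 1) / 2))) *
      ∏ j ∈ Fi n, lam j ^ (an hn a' * (avv hn a j + buu b j * an hn a) +
        buu b j * (an hn a * (an hn a - 1) / 2)) := by
  rw [tauN_red, g_formula hn hnorm a b]
  have hsig : σH a' (conjH b a) =
      ∏ j ∈ Fi n, lam j ^ (an hn a' * (avv hn a j + buu b j * an hn a)) := by
    rw [normalized_sigOK hn hnorm a' (conjH b a)]
    refine Finset.prod_congr rfl fun j hj => ?_
    rw [avv_conjH hn b a (mem_Fi.mp hj)]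
  rw [hsig]
  refine (mul_left_comm _ _ _).trans ?_
  congr 1
  rw [← Finset.prod_mul_distrib]
  exact Finset.prod_congr rfl fun j _ => (zpow_add _ _ _).symm

end Final

-- AUX END
/-- the explicit formula for the multiplier `τ` attached to a
normalized pair, where `λ_{i,jn} = g(v_{jn},u_i)` and `λ_{n,jn} = λ_j`. -/
theorem tauN_formula (n : ℕ) (hn : 2 ≤ n) (lam : Fin n → Circle)
    (σH : Hsub n → Hsub n → Circle) (g : Hsub n → Gsub n → Circle)
    (hnorm : Normalized (show 0 < n by omega) σH g lam) :
    ∀ (a a' : Hsub n) (b b' : Gsub n),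
      tauN σH g ((a' : G n) * (b : G n)) ((a : G n) * (b' : G n)) =
        (∏ p ∈ Finset.univ.filter
            (fun p : Fin n × Fin n => p.1 < p.2 ∧ (p.2 : ℕ) + 1 < n),
          gvu g p.2 p.1 ^ (vc (a : G n) p.2 (lastI n (by omega)) * uc (b : G n) p.1 +
            uc (a : G n) (lastI n (by omega)) * vc (b : G n) p.1 p.2) *
          gvu g p.1 p.2 ^ (vc (a : G n) p.1 (lastI n (by omega)) * uc (b : G n) p.2 +
            uc (a : G n) (lastI n (by omega)) *
              (uc (b : G n) p.1 * uc (b : G n) p.2 - vc (b : G n) p.1 p.2))) *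
        (∏ j ∈ Finset.univ.filter (fun j : Fin n => (j : ℕ) + 1 < n),
          gvu g j j ^ (vc (a : G n) j (lastI n (by omega)) * uc (b : G n) j +
            uc (a : G n) (lastI n (by omega)) *
              (uc (b : G n) j * (uc (b : G n) j - 1) / 2))) *
        ∏ j ∈ Finset.univ.filter (fun j : Fin n => (j : ℕ) + 1 < n),
          lam j ^ (uc (a' : G n) (lastI n (by omega)) *
              (vc (a : G n) j (lastI n (by omega)) +
                uc (b : G n) j * uc (a : G n) (lastI n (by omega))) +
            uc (b : G n) j * (uc (a : G n) (lastI n (by omega)) *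
              (uc (a : G n) (lastI n (by omega)) - 1) / 2)) := by
  intro a a' b b'
  exact tau_formula hn hnorm a a' b b'

end FreeNilp
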